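/- Let 0 ≤ η < 1/2, G(z) = (1/4)z⁴ + 2ηz³ + 4η²z² − z², v₀ = √(−G(√(η²+2)−3η)), and for v ∈ (0, v₀) let y(v) be the smallest positive root of G(z) + v² = 0. Then the map v ↦ v / y(v) is non-increasing on (0, v₀). -/
import Mathlib
set_option maxHeartbeats 1000000


theorem v_div_yv_antitone (η : ℝ) (hη0 : 0 ≤ η) (hη : η < 1/2)
    (G : ℝ → ℝ) (hG : ∀ z, G z = (1/4) * z^4 + 2*η*z^3 + 4*η^2*z^2 - z^2)
    (v₀ : ℝ) (hv₀ : v₀ = Real.sqrt (-(G (Real.sqrt (η^2 + 2) - 3*η))))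
    (yf : ℝ → ℝ)
    (hyf : ∀ v ∈ Set.Ioo (0:ℝ) v₀, IsLeast {z : ℝ | 0 < z ∧ G z + v^2 = 0} (yf v)) :
    AntitoneOn (fun v => v / yf v) (Set.Ioo (0:ℝ) v₀) := by
  intro v₁ hv₁ v₂ hv₂ hle
  obtain ⟨⟨hy₁pos, hy₁root⟩, hleast₁⟩ := hyf v₁ hv₁
  obtain ⟨⟨hy₂pos, hy₂root⟩, _⟩ := hyf v₂ hv₂
  set y₁ := yf v₁ with hy₁
  set y₂ := yf v₂ with hy₂
  clear_value y₁ y₂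
  have hv₁pos : 0 < v₁ := hv₁.1
  have hv₂pos : 0 < v₂ := hv₂.1
  -- continuity of -G
  have hcont : Continuous (fun z => -(G z)) := by
    have : (fun z => -(G z)) = fun z => -((1/4) * z^4 + 2*η*z^3 + 4*η^2*z^2 - z^2) := by
      funext z; rw [hG]
    rw [this]; continuity
  have hg0 : -(G 0) = 0 := by rw [hG]; ring
  have hgy₂ : -(G y₂) = v₂^2 := by linarith
  have hsq : v₁^2 ∈ Set.Icc (-(G 0)) (-(G y₂)) := by
    rw [hg0, hgy₂]
    exact ⟨by positivity, by nlinarith⟩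
  obtain ⟨z, hz, hgz⟩ := intermediate_value_Icc (le_of_lt hy₂pos) hcont.continuousOn hsq
  have hgz' : -(G z) = v₁^2 := hgz
  have hzpos : 0 < z := by
    rcases lt_or_eq_of_le hz.1 with h | h
    · exact h
    · exfalso
      rw [← h, hg0] at hgz'
      have : (0:ℝ) < v₁^2 := by positivity
      linarith
  have hy12 : y₁ ≤ y₂ := le_trans (hleast₁ ⟨hzpos, by linarith⟩) hz.2
  -- algebraic relations
  have h1 : v₁^2 = y₁^2 * (1 - 4*η^2 - 2*η*y₁ - y₁^2/4) := by
    linear_combination hy₁root - hG y₁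
  have h2 : v₂^2 = y₂^2 * (1 - 4*η^2 - 2*η*y₂ - y₂^2/4) := by
    linear_combination hy₂root - hG y₂
  have e : (v₁*y₂)^2 - (v₂*y₁)^2
      = y₁^2*y₂^2*(2*η*(y₂-y₁) + (y₂+y₁)*(y₂-y₁)/4) := by
    linear_combination y₂^2 * h1 - y₁^2 * h2
  have hA : 0 ≤ 2*η*(y₂-y₁) + (y₂+y₁)*(y₂-y₁)/4 := by
    have h12 : 0 ≤ y₂ - y₁ := sub_nonneg.2 hy12
    have t1 := mul_nonneg hη0 h12
    have t2 := mul_nonneg (le_of_lt (add_pos hy₂pos hy₁pos)) h12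
    linarith
  have hnn : 0 ≤ y₁^2*y₂^2*(2*η*(y₂-y₁) + (y₂+y₁)*(y₂-y₁)/4) :=
    mul_nonneg (mul_nonneg (sq_nonneg y₁) (sq_nonneg y₂)) hA
  have key : (v₂*y₁)^2 ≤ (v₁*y₂)^2 := by linarith
  have goal' : v₂ / y₂ ≤ v₁ / y₁ := by
    rw [div_le_div_iff₀ hy₂pos hy₁pos]
    nlinarith [key, mul_pos hv₁pos hy₂pos, mul_pos hv₂pos hy₁pos]
  simpa only [← hy₁, ← hy₂] using goal'
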